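/- If G is a connected bipartite graph with partite sets A and B such that |A| < |B| and every vertex in A has degree at most 2, then G is a tree, |B| = |A| + 1, and every vertex in A has degree exactly 2. -/

import Mathlib

open Finset

/-- `A`, `B` form a bipartition of the simple graph `G`: they are disjoint,
cover all vertices, and every edge joins `A` to `B`. -/
def IsBipartition {V : Type} [DecidableEq V] [Fintype V] (G : SimpleGraph V) (A B : Finset V) : Prop :=
  Disjoint A B ∧ A ∪ B = Finset.univ ∧
    ∀ u v : V, G.Adj u v → (u ∈ A ∧ v ∈ B) ∨ (u ∈ B ∧ v ∈ A)

/-- `G` (with bipartition `A`, `B`) has a bihole of order `k`: an independent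
set `I` with `|I ∩ A| = |I ∩ B| = k`. -/
def HasBihole {V : Type} [DecidableEq V] [Fintype V] (G : SimpleGraph V) (A B : Finset V) (k : ℕ) : Prop :=
  ∃ I : Finset V, (∀ u ∈ I, ∀ v ∈ I, ¬ G.Adj u v) ∧ (I ∩ A).card = k ∧ (I ∩ B).card = k

section AuxLemmas
open SimpleGraph

-- Lemma 1: connected implies |V| ≤ |E| + 1
lemma aux_card_le_edges {V : Type} [Fintype V] (G : SimpleGraph V) (hconn : G.Connected) :
    Fintype.card V ≤ G.edgeSet.ncard + 1 := by
  classical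
  obtain ⟨root⟩ := hconn.nonempty
  have key : ∀ w : V, ∃ u, w ≠ root → G.Adj w u ∧ G.dist u root < G.dist w root := by
    intro w
    by_cases hw : w = root
    · exact ⟨w, fun h => absurd hw h⟩
    · have hpos : 0 < G.dist w root := hconn.pos_dist_of_ne hw
      obtain ⟨p, hp⟩ := hconn.exists_walk_length_eq_dist w root
      cases p with
      | nil => exact absurd rfl hw
      | @cons _ u _ h q =>
        refine ⟨u, fun _ => ⟨h, ?_⟩⟩
        have := G.dist_le q
        simp [Walk.length_cons] at hp
        omega
  choose f hf using key
  have hfin : G.edgeSet.Finite := Set.toFinite _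
  have hinj : Set.InjOn (fun w => s(w, f w)) ((Finset.univ.erase root) : Finset V) := by
    intro w1 hw1 w2 hw2 heq
    simp only [Finset.coe_erase, Set.mem_diff, Finset.mem_coe, Finset.mem_erase] at hw1 hw2
    have hw1' : w1 ≠ root := by simpa using hw1
    have hw2' : w2 ≠ root := by simpa using hw2
    simp only [Sym2.eq_iff] at heq
    rcases heq with ⟨h1, h2⟩ | ⟨h1, h2⟩
    · exact h1
    · exfalso
      have d1 := (hf w1 hw1').2
      have d2 := (hf w2 hw2').2
      rw [← h1] at d2; rw [h2] at d1
      omega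
  have hmaps : ∀ w ∈ (Finset.univ.erase root), s(w, f w) ∈ hfin.toFinset := by
    intro w hw
    rw [Set.Finite.mem_toFinset]
    exact (hf w (Finset.ne_of_mem_erase hw)).1
  have hcard := Finset.card_le_card_of_injOn _ hmaps (by
    intro a ha b hb hab
    exact hinj (by simpa using ha) (by simpa using hb) hab)
  rw [Finset.card_erase_of_mem (Finset.mem_univ root), Finset.card_univ] at hcard
  rw [Set.ncard_eq_toFinset_card _ hfin]
  omega

-- Lemma 2: deleting a non-bridge edge keeps connectivity
lemma aux_del_conn {V : Type} {G : SimpleGraph V} {v w : V}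
    (hr : (G \ SimpleGraph.fromEdgeSet {s(v, w)}).Reachable v w) (hc : G.Connected) :
    (G \ SimpleGraph.fromEdgeSet {s(v, w)}).Connected := by
  classical
  rw [connected_iff] at hc ⊢
  refine ⟨?_, hc.2⟩
  intro a b
  obtain ⟨p⟩ := hc.1 a b
  induction p with
  | nil => exact Reachable.refl _
  | @cons a c b h q ih =>
    refine Reachable.trans ?_ ih
    by_cases he : s(a, c) = s(v, w)
    · rw [Sym2.eq_iff] at he
      rcases he with ⟨rfl, rfl⟩ | ⟨rfl, rfl⟩
      · exact hr
      · exact hr.symm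
    · refine Adj.reachable ?_
      simp only [SimpleGraph.sdiff_adj, SimpleGraph.fromEdgeSet_adj]
      exact ⟨h, fun hmem => he (by simpa using hmem.1)⟩

-- Lemma 3: connected with few edges implies acyclic
lemma aux_acyclic {V : Type} [Fintype V] (G : SimpleGraph V) (hc : G.Connected)
    (hcard : G.edgeSet.ncard + 1 ≤ Fintype.card V) : G.IsAcyclic := by
  classical
  rw [isAcyclic_iff_forall_adj_isBridge]
  intro v w hadj
  by_contra hnb
  rw [isBridge_iff] at hnb
  push_neg at hnb
  have hr : (G \ SimpleGraph.fromEdgeSet {s(v, w)}).Reachable v w := hnb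
  have hc' := aux_del_conn hr hc
  have hle := aux_card_le_edges _ hc'
  have hes : (G \ SimpleGraph.fromEdgeSet {s(v, w)}).edgeSet = G.edgeSet \ {s(v, w)} := by
    simp [edgeSet_sdiff, edgeSet_fromEdgeSet, edgeSet_sdiff_sdiff_isDiag]
  have hmem : s(v, w) ∈ G.edgeSet := hadj
  have h1 : (G.edgeSet \ {s(v, w)}).ncard = G.edgeSet.ncard - 1 :=
    Set.ncard_diff_singleton_of_mem hmem
  have h2 : 1 ≤ G.edgeSet.ncard := (Set.ncard_pos (Set.toFinite _)).2 ⟨_, hmem⟩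
  rw [hes, h1] at hle
  omega

end AuxLemmas

/-- If `G` is a connected bipartite graph with `|A| < `|B|` and every vertex of
`A` has degree at most `2`, then `G` is a tree, `|B| = |A| + 1`, and every
vertex of `A` has degree exactly `2`. -/
theorem stmt6 (V : Type) [DecidableEq V] [Fintype V] (G : SimpleGraph V) [DecidableRel G.Adj]
    (A B : Finset V) (hbip : IsBipartition G A B) (hconn : G.Connected)
    (hAB : A.card < B.card) (hdeg : ∀ u ∈ A, G.degree u ≤ 2) :
    G.IsTree ∧ B.card = A.card + 1 ∧ ∀ u ∈ A, G.degree u = 2 := by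
  classical
  obtain ⟨hdisj, hcover, hedge⟩ := hbip
  -- degrees in A count neighbors in B and vice versa
  have hnbA : ∀ a ∈ A, G.neighborFinset a = B.filter (G.Adj a) := by
    intro a ha
    ext b
    simp only [SimpleGraph.mem_neighborFinset, Finset.mem_filter]
    constructor
    · intro hab
      rcases hedge a b hab with ⟨_, hb⟩ | ⟨haB, _⟩
      · exact ⟨hb, hab⟩
      · exact absurd haB (Finset.disjoint_left.1 hdisj ha)
    · exact fun h => h.2
  have hnbB : ∀ b ∈ B, G.neighborFinset b = A.filter (fun a => G.Adj a b) := by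
    intro b hb
    ext a
    simp only [SimpleGraph.mem_neighborFinset, Finset.mem_filter]
    constructor
    · intro hba
      rcases hedge b a hba with ⟨hbA, _⟩ | ⟨_, ha⟩
      · exact absurd hb (Finset.disjoint_left.1 hdisj hbA)
      · exact ⟨ha, hba.symm⟩
    · exact fun h => h.2.symm
  -- both degree sums equal (double counting)
  have hsum : ∑ a ∈ A, G.degree a = ∑ b ∈ B, G.degree b := by
    calc ∑ a ∈ A, G.degree a = ∑ a ∈ A, ∑ b ∈ B, if G.Adj a b then 1 else 0 := by
          refine Finset.sum_congr rfl fun a ha => ?_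
          rw [SimpleGraph.degree, hnbA a ha, Finset.card_filter]
      _ = ∑ b ∈ B, ∑ a ∈ A, if G.Adj a b then 1 else 0 := Finset.sum_comm
      _ = ∑ b ∈ B, G.degree b := by
          refine Finset.sum_congr rfl fun b hb => ?_
          rw [SimpleGraph.degree, hnbB b hb, Finset.card_filter]
  -- total sum
  have htot : ∑ a ∈ A, G.degree a + ∑ b ∈ B, G.degree b = 2 * G.edgeFinset.card := by
    rw [← Finset.sum_union hdisj, hcover]
    exact G.sum_degrees_eq_twice_card_edges
  have hE : ∑ a ∈ A, G.degree a = G.edgeFinset.card := by omega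
  have hEle : G.edgeFinset.card ≤ 2 * A.card := by
    rw [← hE]
    calc ∑ a ∈ A, G.degree a ≤ ∑ _a ∈ A, 2 := Finset.sum_le_sum hdeg
      _ = 2 * A.card := by rw [Finset.sum_const, smul_eq_mul, mul_comm]
  have hVcard : Fintype.card V = A.card + B.card := by
    rw [← Finset.card_union_of_disjoint hdisj, hcover, Finset.card_univ]
  have hlow := aux_card_le_edges G hconn
  have hncard : G.edgeSet.ncard = G.edgeFinset.card := by
    rw [Set.ncard_eq_toFinset_card']
    exact congrArg Finset.card (by ext e; simp)
  rw [hncard] at hlow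
  -- conclude cardinalities
  have hB : B.card = A.card + 1 := by omega
  have hEeq : G.edgeFinset.card + 1 = Fintype.card V := by omega
  have htree : G.IsTree := ⟨hconn, aux_acyclic G hconn (by omega)⟩
  refine ⟨htree, hB, ?_⟩
  -- all degrees in A equal 2
  intro u hu
  by_contra hne
  have hlt : G.degree u < 2 := lt_of_le_of_ne (hdeg u hu) hne
  have : ∑ a ∈ A, G.degree a < ∑ _a ∈ A, 2 :=
    Finset.sum_lt_sum (fun a ha => hdeg a ha) ⟨u, hu, hlt⟩
  rw [Finset.sum_const, smul_eq_mul] at this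
  omega
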